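/- Let (φ, Q, ξ, η, g) be a weak almost contact metric structure on V and suppose there is a real λ > 0 with Q X = λ·X for all X ∈ D = ker η. Define φ' := λ^(−1/2)·φ and the bilinear form g'(X, Y) := λ^(1/2)·(⟪X, Y⟫ − η(X)η(Y)) + η(X)η(Y). Then g' is a positive definite symmetric bilinear form (an inner product) on V, and g' is compatible with the classical almost contact structure (φ', ξ, η): g'(φ' X, φ' Y) = g'(X, Y) − η(X)η(Y) for all X, Y ∈ V; moreover g'(ξ, X) = η(X) for all X. -/

import Mathlib

open RealInnerProductSpace

theorem weak_acm_stmt_13 {V : Type*} [NormedAddCommGroup V] [InnerProductSpace ℝ V]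
    [FiniteDimensional ℝ V]
    {n : ℕ} (hn : 1 ≤ n) (hdim : Module.finrank ℝ V = 2 * n + 1)
    (φ Q : V →ₗ[ℝ] V) (hQbij : Function.Bijective Q)
    (ξ : V) (η : V →ₗ[ℝ] ℝ)
    (hηξ : η ξ = 1)
    (hφφ : ∀ X : V, φ (φ X) = -(Q X) + η X • ξ)
    (hQξ : Q ξ = ξ)
    (hD : ∀ X : V, η X = 0 → η (φ X) = 0)
    (hcomp : ∀ X Y : V, ⟪φ X, φ Y⟫ = ⟪X, Q Y⟫ - η X * η Y)
    (lam : ℝ) (hlam : 0 < lam) (hQD : ∀ X : V, η X = 0 → Q X = lam • X)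
    (φ' : V →ₗ[ℝ] V) (hφ' : ∀ X : V, φ' X = (Real.sqrt lam)⁻¹ • φ X)
    (g' : V → V → ℝ)
    (hg' : ∀ X Y : V, g' X Y = Real.sqrt lam * (⟪X, Y⟫ - η X * η Y) + η X * η Y)
    :
    (∀ X Y : V, g' X Y = g' Y X) ∧
    (∀ X : V, X ≠ 0 → 0 < g' X X) ∧
    (∀ X Y : V, g' (φ' X) (φ' Y) = g' X Y - η X * η Y) ∧
    (∀ X : V, g' ξ X = η X) := by
  have hsq : Real.sqrt lam * Real.sqrt lam = lam := Real.mul_self_sqrt hlam.le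
  have hsqpos : 0 < Real.sqrt lam := Real.sqrt_pos.mpr hlam
  -- Step 1: φ ξ = 0
  set u : V := φ ξ with hu
  have hφu : φ u = 0 := by
    have := hφφ ξ
    rw [hηξ, hQξ, one_smul, neg_add_cancel] at this
    exact this
  have hQu : Q u = η u • ξ := by
    have h := hφφ u
    rw [hφu, map_zero] at h
    exact neg_add_eq_zero.mp h.symm
  have hηu : η u = 0 := by
    by_contra h
    have h1 := hcomp ξ u
    rw [hφu, inner_zero_right, hQu, inner_smul_right, hηξ, one_mul] at h1
    have hξξ : ⟪ξ, ξ⟫ = (1:ℝ) := by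
      have h3 : η u * (⟪ξ, ξ⟫ - 1) = 0 := by linear_combination -h1
      rcases mul_eq_zero.mp h3 with h' | h'
      · exact absurd h' h
      · linarith
    have h2 := hcomp ξ ξ
    rw [hQξ, hηξ, hξξ, one_mul] at h2
    have hz : ⟪u, u⟫ = (0:ℝ) := by rw [h2]; ring
    have : u = 0 := inner_self_eq_zero.mp hz
    rw [this, map_zero] at h
    exact h rfl
  have hu0 : u = 0 := by
    have : Q u = Q 0 := by rw [hQu, hηu, zero_smul, map_zero]
    exact hQbij.injective this
  -- Step 2: ⟪ξ, ξ⟫ = 1 and ⟪X, ξ⟫ = η X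
  have hξξ : ⟪ξ, ξ⟫ = (1:ℝ) := by
    have h2 := hcomp ξ ξ
    rw [hQξ, hηξ, ← hu, hu0, inner_zero_left, one_mul] at h2
    linarith
  have hXξ : ∀ X : V, ⟪X, ξ⟫ = η X := by
    intro X
    have h := hcomp X ξ
    rw [hQξ, hηξ, mul_one, ← hu, hu0, inner_zero_right] at h
    linarith
  have hξX : ∀ X : V, ⟪ξ, X⟫ = η X := by
    intro X; rw [real_inner_comm]; exact hXξ X
  -- Step 3: η (φ X) = 0 for all X
  have hηφ : ∀ X : V, η (φ X) = 0 := by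
    intro X
    have h0 : η (X - η X • ξ) = 0 := by simp [hηξ]
    have := hD _ h0
    rwa [map_sub, map_smul, ← hu, hu0, smul_zero, sub_zero] at this
  -- Step 4: Q X formula and ⟪φX, φY⟫
  have hQX : ∀ X : V, Q X = lam • X + ((1 - lam) * η X) • ξ := by
    intro X
    have h0 : η (X - η X • ξ) = 0 := by simp [hηξ]
    have h := hQD _ h0
    rw [map_sub, map_smul, hQξ] at h
    have h2 : Q X = lam • (X - η X • ξ) + η X • ξ := by rw [← h]; abel
    rw [h2, smul_sub, smul_smul]
    module
  have hφφinner : ∀ X Y : V, ⟪φ X, φ Y⟫ = lam * (⟪X, Y⟫ - η X * η Y) := by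
    intro X Y
    rw [hcomp, hQX Y, inner_add_right, inner_smul_right, inner_smul_right, hXξ]
    ring
  refine ⟨?_, ?_, ?_, ?_⟩
  · intro X Y
    rw [hg', hg', real_inner_comm]; ring
  · intro X hX
    rw [hg']
    have key : ⟪X, X⟫ - η X * η X = ⟪X - η X • ξ, X - η X • ξ⟫ := by
      rw [inner_sub_sub_self, real_inner_smul_left, real_inner_smul_right,
        real_inner_smul_left, real_inner_smul_right, hXξ, hξX, hξξ]
      ring
    rw [key]
    rcases eq_or_ne (η X) 0 with h | h
    · have hx : X - η X • ξ = X := by rw [h, zero_smul, sub_zero]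
      rw [hx, h]
      have hne : ⟪X, X⟫ ≠ (0:ℝ) := fun hz => hX (inner_self_eq_zero.mp hz)
      have hpos : (0:ℝ) < ⟪X, X⟫ := lt_of_le_of_ne real_inner_self_nonneg (Ne.symm hne)
      nlinarith
    · have h1 : (0:ℝ) ≤ ⟪X - η X • ξ, X - η X • ξ⟫ := real_inner_self_nonneg
      nlinarith [mul_self_pos.mpr h, mul_nonneg hsqpos.le h1]
  · intro X Y
    have hηφ' : ∀ Z : V, η (φ' Z) = 0 := by
      intro Z; rw [hφ', map_smul, hηφ, smul_zero]
    have hinv : (Real.sqrt lam)⁻¹ * (Real.sqrt lam)⁻¹ * lam = 1 := by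
      rw [← hsq]; field_simp; rw [Real.sqrt_sq hsqpos.le]
    rw [hg', hg', hηφ', hηφ', hφ', hφ', real_inner_smul_left, real_inner_smul_right,
      hφφinner]
    linear_combination Real.sqrt lam * (⟪X, Y⟫ - η X * η Y) * hinv
  · intro X
    rw [hg', hξX, hηξ]; ring
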